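/- Let F : ℝ → [0,1] be a distribution function with F(x) < 1 for all x ∈ ℝ, and let (m_n)_{n≥1} be a nondecreasing sequence of positive integers such that (1 − F(n + m_n))/(1 − F(n)) → 1 as n → ∞. Define (v_n)_{n≥1} recursively by v_1 := 1 and v_{n+1} := v_n + m_{v_n}, and for x ≥ 1 set n(x) := min{n ∈ ℕ_+ : v_n > x}. Let g : [1,∞) → ℝ be any function satisfying 1 − F(v_{n(x)+1}) ≤ g(x) ≤ 1 − F(v_{n(x)}) for all x ≥ 1. Then g(x)/(1 − F(x)) → 1 as x → ∞. -/
import Mathlib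


open Filter

/-- Let `F` be a distribution function with `F(x) < 1` for all `x`, and
`(m_n)` a nondecreasing sequence of positive integers with
`(1 - F(n + m_n)) / (1 - F(n)) → 1`.  Define `v_1 = 1`, `v_{n+1} = v_n + m_{v_n}` and
`n(x) := min {n ≥ 1 : v_n > x}`.  If `g : [1,∞) → ℝ` satisfies
`1 - F(v_{n(x)+1}) ≤ g(x) ≤ 1 - F(v_{n(x)})` for all `x ≥ 1`, then
`g(x) / (1 - F(x)) → 1` as `x → ∞`. -/
theorem sandwiched_tail_equivalent
    (F : ℝ → ℝ)
    (hFmono : Monotone F)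
    (hFrc : ∀ x, ContinuousWithinAt F (Set.Ici x) x)
    (hFbot : Tendsto F atBot (nhds 0)) (hFtop : Tendsto F atTop (nhds 1))
    (hFlt : ∀ x, F x < 1)
    (m : ℕ → ℕ) (hm1 : ∀ n, 1 ≤ m n) (hmmono : Monotone m)
    (hmF : Tendsto (fun n : ℕ => (1 - F ((n : ℝ) + (m n : ℝ))) / (1 - F (n : ℝ)))
      atTop (nhds 1))
    (v : ℕ → ℕ) (hv1 : v 1 = 1) (hvrec : ∀ n, 1 ≤ n → v (n + 1) = v n + m (v n))
    (nx : ℝ → ℕ) (hnx : ∀ x, nx x = sInf {n : ℕ | 1 ≤ n ∧ x < (v n : ℝ)})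
    (g : ℝ → ℝ)
    (hg : ∀ x, 1 ≤ x → 1 - F (v (nx x + 1)) ≤ g x ∧ g x ≤ 1 - F (v (nx x))) :
    Tendsto (fun x => g x / (1 - F x)) atTop (nhds 1) := by
  have hF1 : ∀ x : ℝ, 0 < 1 - F x := fun x => by linarith [hFlt x]
  have hvstep : ∀ n, 1 ≤ n → v n + 1 ≤ v (n + 1) := by
    intro n hn; rw [hvrec n hn]; have := hm1 (v n); omega
  have hvge : ∀ n, 1 ≤ n → n ≤ v n := by
    intro n hn
    induction n with
    | zero => omega
    | succ k ih =>
      rcases Nat.eq_zero_or_pos k with hk | hk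
      · subst hk; simp [hv1]
      · have := hvstep k hk; have := ih hk; omega
  have hvmono : ∀ a, 1 ≤ a → ∀ b, a ≤ b → v a ≤ v b := by
    intro a ha b hb
    induction b, hb using Nat.le_induction with
    | base => exact le_rfl
    | succ n hn ih => exact ih.trans (by have := hvstep n (ha.trans hn); omega)
  have hne : ∀ x : ℝ, ({n : ℕ | 1 ≤ n ∧ x < (v n : ℝ)}).Nonempty := by
    intro x
    refine ⟨⌊x⌋₊ + 1, by omega, ?_⟩
    have h1 : x < (⌊x⌋₊ : ℝ) + 1 := Nat.lt_floor_add_one x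
    have h2 : (⌊x⌋₊ + 1 : ℕ) ≤ v (⌊x⌋₊ + 1) := hvge _ (by omega)
    calc x < ((⌊x⌋₊ + 1 : ℕ) : ℝ) := by push_cast; linarith
      _ ≤ (v (⌊x⌋₊ + 1) : ℝ) := by exact_mod_cast h2
  have hNmem : ∀ x : ℝ, 1 ≤ nx x ∧ x < (v (nx x) : ℝ) := by
    intro x; rw [hnx]; exact Nat.sInf_mem (hne x)
  have hNlt : ∀ x : ℝ, ∀ n, 1 ≤ n → n < nx x → (v n : ℝ) ≤ x := by
    intro x n h1 h2
    rw [hnx] at h2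
    have := Nat.notMem_of_lt_sInf h2
    simp only [Set.mem_setOf_eq, not_and, not_lt] at this
    exact this h1
  have hN2 : ∀ x : ℝ, 1 ≤ x → 2 ≤ nx x := by
    intro x hx
    by_contra h
    push_neg at h
    have h1 := (hNmem x).1
    have h2 := (hNmem x).2
    have h3 : nx x = 1 := by omega
    rw [h3, hv1] at h2
    simp at h2
    linarith
  -- nx tends to infinity
  have hNtop : Tendsto nx atTop atTop := by
    rw [tendsto_atTop_atTop]
    intro M
    refine ⟨(v (M + 1) : ℝ), fun x hx => ?_⟩
    by_contra h
    push_neg at h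
    have h1 := (hNmem x).1
    have h2 := (hNmem x).2
    have : v (nx x) ≤ v (M + 1) := hvmono _ h1 _ (by omega)
    have : (v (nx x) : ℝ) ≤ (v (M + 1) : ℝ) := by exact_mod_cast this
    linarith
  have hvtop : Tendsto (fun n => v n) atTop atTop :=
    tendsto_atTop_mono' atTop
      (by filter_upwards [eventually_ge_atTop 1] with n hn; exact hvge n hn)
      tendsto_id
  -- the ratio sequence r n := (1 - F (v (n+1))) / (1 - F (v n)) tends to 1
  set r : ℕ → ℝ := fun n => (1 - F ((v (n + 1) : ℝ))) / (1 - F ((v n : ℝ))) with hr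
  have hrt : Tendsto r atTop (nhds 1) := by
    have h1 : Tendsto (fun n => (1 - F (((v n : ℕ) : ℝ) + ((m (v n) : ℕ) : ℝ))) /
        (1 - F ((v n : ℝ)))) atTop (nhds 1) := hmF.comp hvtop
    apply h1.congr'
    filter_upwards [eventually_ge_atTop 1] with n hn
    simp only [hr, hvrec n hn]
    push_cast
    ring_nf
  have hsub : Tendsto (fun n : ℕ => n - 1) atTop atTop := tendsto_sub_atTop_nat 1
  have hprod : Tendsto (fun n => r n * r (n - 1)) atTop (nhds 1) := by
    have := hrt.mul (hrt.comp hsub)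
    rw [one_mul] at this
    exact this
  have hlow : Tendsto (fun x => r (nx x) * r (nx x - 1)) atTop (nhds 1) :=
    hprod.comp hNtop
  refine tendsto_of_tendsto_of_tendsto_of_le_of_le' hlow tendsto_const_nhds ?_ ?_
  · -- lower bound
    filter_upwards [eventually_ge_atTop (1 : ℝ)] with x hx
    set N := nx x with hNdef
    have hN2' : 2 ≤ N := hN2 x hx
    have hvN1 : (v (N - 1) : ℝ) ≤ x := hNlt x (N - 1) (by omega) (by omega)
    have hFle : F ((v (N - 1) : ℝ)) ≤ F x := hFmono hvN1
    have hsucc : N - 1 + 1 = N := by omega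
    have hgx := hg x hx
    have hnum : (0 : ℝ) < 1 - F ((v (N + 1) : ℝ)) := hF1 _
    have heq : r N * r (N - 1) =
        (1 - F ((v (N + 1) : ℝ))) / (1 - F ((v (N - 1) : ℝ))) := by
      have hB : (1 - F ((v N : ℝ))) ≠ 0 := (hF1 _).ne'
      have hC : (1 - F ((v (N - 1) : ℝ))) ≠ 0 := (hF1 _).ne'
      simp only [hr, hsucc]
      field_simp
    rw [heq]
    exact div_le_div₀ (hnum.le.trans hgx.1) hgx.1 (hF1 x) (by linarith)
  · -- upper bound
    filter_upwards [eventually_ge_atTop (1 : ℝ)] with x hx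
    have h2 := (hNmem x).2
    have hFle : F x ≤ F ((v (nx x) : ℝ)) := hFmono h2.le
    have hgx := hg x hx
    rw [div_le_one (hF1 x)]
    linarith [hgx.2]
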